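/- Let t ≥ 1 and L ≥ 1 be integers, and for each i ∈ [L] let ν_i ∈ [0, 1] and N_i ∈ ℕ. Define σ_i = max{ √(ν_i · log(t+1)/(N_i + 1)), log(t+1)/(N_i + 1) }, g_i = √(16 ν_i log(t+1)/(N_i + 1)) + 24 log(t+1)/(N_i + 1), and h_i = √(log(t+1)) · g_i. If Z is a standard Gaussian random variable, then the probability that there exists i ∈ [L] with |Z| · σ_i > h_i is at most 1/(2 (t+1)^3). -/
import Mathlib


open ProbabilityTheory

lemma tail_int {c : ℝ} (hc : 1 ≤ c) :
    ∫ x in Set.Ioi c, Real.exp (-x^2/2) ≤ Real.exp (-c^2/2) / c := by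
  have hc0 : (0:ℝ) < c := lt_of_lt_of_le one_pos hc
  have hInt2 : MeasureTheory.IntegrableOn
      (fun x : ℝ => Real.exp (c^2/2) * Real.exp (-c * x)) (Set.Ioi c) :=
    (exp_neg_integrableOn_Ioi c hc0).const_mul _
  have hInt1 : MeasureTheory.IntegrableOn (fun x : ℝ => Real.exp (-x^2/2)) (Set.Ioi c) := by
    have h := (integrable_exp_neg_mul_sq (by norm_num : (0:ℝ) < 1/2)).integrableOn (s := Set.Ioi c)
    have he : (fun x:ℝ => Real.exp (-x^2/2)) = fun x => Real.exp (-(1/2) * x^2) := by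
      funext x; ring_nf
    rw [he]; exact h
  calc ∫ x in Set.Ioi c, Real.exp (-x^2/2)
      ≤ ∫ x in Set.Ioi c, Real.exp (c^2/2) * Real.exp (-c * x) := by
        refine MeasureTheory.setIntegral_mono_on hInt1 hInt2 measurableSet_Ioi (fun x hx => ?_)
        rw [← Real.exp_add]
        apply Real.exp_le_exp.2
        have : c < x := hx
        nlinarith
    _ = Real.exp (c^2/2) * ∫ x in Set.Ioi c, Real.exp (-c * x) := by
        rw [MeasureTheory.integral_const_mul]
    _ = Real.exp (c^2/2) * (c⁻¹ * Real.exp (-(c*c))) := by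
        have : (∫ x in Set.Ioi c, Real.exp (-c * x))
            = (∫ x in Set.Ioi c, Real.exp (-(c * x))) := by
          congr 1 with x; ring_nf
        rw [this, MeasureTheory.integral_comp_mul_left_Ioi (fun x => Real.exp (-x)) c hc0,
          integral_exp_neg_Ioi, smul_eq_mul]
    _ = Real.exp (-c^2/2) / c := by
        rw [mul_comm, mul_assoc, ← Real.exp_add, show -(c*c) + c^2/2 = -c^2/2 by ring,
          div_eq_inv_mul]
        ring_nf


lemma gauss_tail {c : ℝ} (hc : 1 ≤ c) :
    gaussianReal 0 1 {z : ℝ | c < |z|} ≤ ENNReal.ofReal (Real.exp (-c^2/2)) := by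
  have hc0 : (0:ℝ) < c := lt_of_lt_of_le one_pos hc
  have hpdf : ∀ x : ℝ, gaussianPDFReal 0 1 x = (Real.sqrt (2*Real.pi))⁻¹ * Real.exp (-x^2/2) := by
    intro x
    simp [gaussianPDFReal]
  have hsqrt : (2:ℝ) ≤ Real.sqrt (2*Real.pi) := by
    have h4 : (4:ℝ) ≤ 2*Real.pi := by nlinarith [Real.pi_gt_three]
    calc (2:ℝ) = Real.sqrt 4 := by
          rw [show (4:ℝ) = 2^2 by norm_num, Real.sqrt_sq (by norm_num)]
      _ ≤ Real.sqrt (2*Real.pi) := Real.sqrt_le_sqrt h4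
  have hIoi : gaussianReal 0 1 (Set.Ioi c) ≤ ENNReal.ofReal (Real.exp (-c^2/2)/2) := by
    rw [gaussianReal_apply_eq_integral 0 one_ne_zero]
    apply ENNReal.ofReal_le_ofReal
    have h1 : (∫ x in Set.Ioi c, gaussianPDFReal 0 1 x)
        = (Real.sqrt (2*Real.pi))⁻¹ * ∫ x in Set.Ioi c, Real.exp (-x^2/2) := by
      simp_rw [hpdf]
      rw [MeasureTheory.integral_const_mul]
    rw [h1]
    have h2 := tail_int hc
    have hnn : 0 ≤ ∫ x in Set.Ioi c, Real.exp (-x^2/2) :=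
      MeasureTheory.setIntegral_nonneg measurableSet_Ioi (fun x _ => (Real.exp_pos _).le)
    have hi : (Real.sqrt (2*Real.pi))⁻¹ ≤ 1/2 := by
      rw [show (1:ℝ)/2 = 2⁻¹ by norm_num]
      exact inv_anti₀ (by norm_num) hsqrt
    calc (Real.sqrt (2*Real.pi))⁻¹ * ∫ x in Set.Ioi c, Real.exp (-x^2/2)
        ≤ (1/2) * (Real.exp (-c^2/2) / c) :=
          mul_le_mul hi h2 hnn (by norm_num)
      _ ≤ Real.exp (-c^2/2)/2 := by
          have : Real.exp (-c^2/2) / c ≤ Real.exp (-c^2/2) :=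
            div_le_self (Real.exp_pos _).le hc
          linarith
  have hmap : (gaussianReal 0 1).map (fun x : ℝ => (-1) * x) = gaussianReal 0 1 := by
    rw [gaussianReal_map_const_mul]
    norm_num
  have hIio : gaussianReal 0 1 (Set.Iio (-c)) = gaussianReal 0 1 (Set.Ioi c) := by
    conv_lhs => rw [← hmap]
    rw [MeasureTheory.Measure.map_apply (by fun_prop) measurableSet_Iio]
    congr 1
    ext x
    simp only [Set.mem_preimage, Set.mem_Iio, Set.mem_Ioi]
    constructor <;> intro hx <;> linarith
  have hset : {z : ℝ | c < |z|} = Set.Iio (-c) ∪ Set.Ioi c := by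
    ext z
    simp only [Set.mem_setOf_eq, Set.mem_union, Set.mem_Iio, Set.mem_Ioi, lt_abs]
    constructor
    · rintro (h1 | h1)
      · exact Or.inr h1
      · exact Or.inl (by linarith)
    · rintro (h1 | h1)
      · exact Or.inr (by linarith)
      · exact Or.inl h1
  rw [hset]
  calc gaussianReal 0 1 (Set.Iio (-c) ∪ Set.Ioi c)
      ≤ gaussianReal 0 1 (Set.Iio (-c)) + gaussianReal 0 1 (Set.Ioi c) :=
        MeasureTheory.measure_union_le _ _
    _ = gaussianReal 0 1 (Set.Ioi c) + gaussianReal 0 1 (Set.Ioi c) := by rw [hIio]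
    _ ≤ ENNReal.ofReal (Real.exp (-c^2/2)/2) + ENNReal.ofReal (Real.exp (-c^2/2)/2) :=
        add_le_add hIoi hIoi
    _ = ENNReal.ofReal (Real.exp (-c^2/2)) := by
        rw [← ENNReal.ofReal_add (by positivity) (by positivity)]
        ring_nf

/-- With `σ_i, g_i, h_i` the TS-Cascade widths built from `ν_i ∈ [0,1]` and counts
`N_i`, for a standard Gaussian `Z` the probability that some item `i` satisfies
`|Z| σ_i > h_i` is at most `1 / (2 (t+1)^3)`. -/
theorem stmt_6 (t L : ℕ) (ht : 1 ≤ t) (hL : 1 ≤ L)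
    (ν : Fin L → ℝ) (hν : ∀ i, 0 ≤ ν i ∧ ν i ≤ 1) (N : Fin L → ℕ)
    (σ g h : Fin L → ℝ)
    (hσ : ∀ i, σ i = max (Real.sqrt (ν i * Real.log (t + 1) / (N i + 1)))
        (Real.log (t + 1) / (N i + 1)))
    (hg : ∀ i, g i = Real.sqrt (16 * ν i * Real.log (t + 1) / (N i + 1))
        + 24 * Real.log (t + 1) / (N i + 1))
    (hh : ∀ i, h i = Real.sqrt (Real.log (t + 1)) * g i) :
    gaussianReal 0 1 {z : ℝ | ∃ i : Fin L, h i < |z| * σ i}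
      ≤ ENNReal.ofReal (1 / (2 * (t + 1) ^ 3)) := by
  have htR : (2:ℝ) ≤ (t:ℝ) + 1 := by
    have : (1:ℝ) ≤ (t:ℝ) := by exact_mod_cast ht
    linarith
  set LG := Real.log ((t:ℝ) + 1) with hLG
  have hLGpos : 0 < LG := Real.log_pos (by linarith)
  have hlog2 : Real.log 2 ≤ LG := Real.log_le_log (by norm_num) htR
  have hlog2' : (0.6931471803:ℝ) < Real.log 2 := Real.log_two_gt_d9
  set c := 4 * Real.sqrt LG with hcdef
  have hsqLG : (1/4:ℝ) ≤ Real.sqrt LG := by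
    have h16 : (1/16 : ℝ) ≤ LG := by linarith
    calc (1/4:ℝ) = Real.sqrt (1/16) := by
          rw [show (1/16:ℝ) = (1/4)^2 by norm_num, Real.sqrt_sq (by norm_num)]
      _ ≤ Real.sqrt LG := Real.sqrt_le_sqrt h16
  have hc : (1:ℝ) ≤ c := by rw [hcdef]; linarith
  have hsub : {z : ℝ | ∃ i : Fin L, h i < |z| * σ i} ⊆ {z : ℝ | c < |z|} := by
    intro z hz
    obtain ⟨i, hi⟩ := hz
    have hN : (0:ℝ) < (N i : ℝ) + 1 := by positivity
    have hσpos : 0 < σ i := by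
      rw [hσ i]
      exact lt_of_lt_of_le (div_pos hLGpos hN) (le_max_right _ _)
    have hcσ : c * σ i ≤ h i := by
      rw [hσ i, hh i, hg i]
      have hs1 : Real.sqrt (16 * ν i * LG / ((N i : ℝ) + 1))
          = 4 * Real.sqrt (ν i * LG / ((N i : ℝ) + 1)) := by
        rw [show 16 * ν i * LG / ((N i : ℝ)+1) = 16 * (ν i * LG / ((N i : ℝ)+1)) by ring,
          Real.sqrt_mul (by norm_num) _,
          show Real.sqrt 16 = 4 by
            rw [show (16:ℝ) = 4^2 by norm_num, Real.sqrt_sq (by norm_num)]]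
      rw [hs1, mul_max_of_nonneg _ _ (by positivity : (0:ℝ) ≤ c)]
      apply max_le
      · have hnn : 0 ≤ 24 * LG / ((N i : ℝ)+1) := by positivity
        have h0 : 0 ≤ Real.sqrt LG := Real.sqrt_nonneg _
        have h1 : 0 ≤ Real.sqrt (ν i * LG / ((N i : ℝ)+1)) := Real.sqrt_nonneg _
        rw [hcdef]
        nlinarith
      · have h0 : 0 ≤ Real.sqrt LG := Real.sqrt_nonneg _
        have h1 : 0 ≤ Real.sqrt (ν i * LG / ((N i : ℝ)+1)) := Real.sqrt_nonneg _
        have h2 : 0 < LG / ((N i : ℝ)+1) := div_pos hLGpos hN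
        have h3 : 24 * LG / ((N i : ℝ)+1) = 24 * (LG / ((N i : ℝ)+1)) := by ring
        rw [hcdef, h3]
        nlinarith
    have hlt : c * σ i < |z| * σ i := lt_of_le_of_lt hcσ hi
    exact lt_of_mul_lt_mul_right hlt hσpos.le
  refine le_trans (MeasureTheory.measure_mono hsub) (le_trans (gauss_tail hc) ?_)
  apply ENNReal.ofReal_le_ofReal
  have hcsq : c^2 = 16 * LG := by
    rw [hcdef, mul_pow, Real.sq_sqrt hLGpos.le]; norm_num
  rw [show -c^2/2 = -(8*LG) by rw [hcsq]; ring]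
  have hx : Real.exp (8 * LG) = ((t:ℝ)+1)^8 := by
    rw [show (8:ℝ) * LG = ((8:ℕ) : ℝ) * LG by norm_num, Real.exp_nat_mul,
      Real.exp_log (by linarith)]
  rw [Real.exp_neg, hx, one_div]
  apply inv_anti₀ (by positivity)
  have h5 : (2:ℝ)^5 ≤ ((t:ℝ)+1)^5 := pow_le_pow_left₀ (by norm_num) htR 5
  have h3 : (0:ℝ) < ((t:ℝ)+1)^3 := by positivity
  nlinarith [mul_le_mul_of_nonneg_right h5 h3.le]
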